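/- Let G be a finite simple undirected graph with Laplacian L = D - A, let D̃ = D + I, let Z be a real n×n matrix with zero diagonal and entries in [-1,1], and set E = D̃^{-1/2} (L ⊙ (Z + I)) D̃^{-1/2}. Then every eigenvalue λ ∈ ℂ of E satisfies Re(λ) ≥ 0. -/

import Mathlib

open Matrix
open scoped ComplexOrder

/-- The quadratic form of the Hadamard product of the Laplacian with `Z + 1`. -/
lemma lying_quad_form (n : ℕ) (G : SimpleGraph (Fin n)) [DecidableRel G.Adj]
    (Z : Matrix (Fin n) (Fin n) ℝ) (hZdiag : ∀ u, Z u u = 0)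
    (x : Fin n → ℝ) :
    x ⬝ᵥ (Matrix.hadamard (G.lapMatrix ℝ) (Z + 1) *ᵥ x) =
      ∑ u, ∑ v, (if G.Adj u v then x u * x u - Z u v * (x u * x v) else 0) := by
  set M := Matrix.hadamard (G.lapMatrix ℝ) (Z + 1) with hM
  have key : ∀ u v, x u * (M u v * x v)
      = (if G.Adj u v then -(Z u v * (x u * x v)) else 0)
        + (if u = v then (G.degree u : ℝ) * (x u * x u) else 0) := by
    intro u v
    rcases eq_or_ne u v with rfl | huv
    · simp only [hM, Matrix.hadamard_apply, SimpleGraph.lapMatrix, Matrix.sub_apply,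
        SimpleGraph.degMatrix, Matrix.diagonal_apply_eq, SimpleGraph.adjMatrix_apply,
        Matrix.add_apply, Matrix.one_apply_eq, hZdiag u, G.irrefl, if_false, if_pos rfl,
        if_true]
      ring
    · by_cases hadj : G.Adj u v <;>
        simp only [hM, Matrix.hadamard_apply, SimpleGraph.lapMatrix, Matrix.sub_apply,
          SimpleGraph.degMatrix, Matrix.diagonal_apply_ne _ huv, SimpleGraph.adjMatrix_apply,
          Matrix.add_apply, Matrix.one_apply_ne huv, hadj, if_true, if_false, if_neg huv] <;>
        ring
  have hlhs : x ⬝ᵥ (M *ᵥ x) = ∑ u, ∑ v, x u * (M u v * x v) := by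
    simp [dotProduct, mulVec, Finset.mul_sum]
  rw [hlhs]
  simp_rw [key, Finset.sum_add_distrib, Finset.sum_ite_eq, Finset.mem_univ, if_true]
  have hdeg : ∀ u, (G.degree u : ℝ) * (x u * x u)
      = ∑ v, (if G.Adj u v then x u * x u else 0) := by
    intro u
    have h := G.degree_eq_sum_if_adj (R := ℝ) u
    rw [h, Finset.sum_mul]
    simp [ite_mul]
  simp_rw [hdeg, ← Finset.sum_add_distrib, ite_add_ite, zero_add]
  congr 1; funext u; congr 1; funext v
  by_cases hadj : G.Adj u v <;> simp [hadj] <;> ring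

/-- The symmetrized Hadamard-Laplacian matrix is positive semidefinite. -/
lemma lying_posSemidef (n : ℕ) (G : SimpleGraph (Fin n)) [DecidableRel G.Adj]
    (Z : Matrix (Fin n) (Fin n) ℝ) (hZdiag : ∀ u, Z u u = 0) (hZbdd : ∀ u v, |Z u v| ≤ 1) :
    (Matrix.hadamard (G.lapMatrix ℝ) (Z + 1) +
      (Matrix.hadamard (G.lapMatrix ℝ) (Z + 1))ᵀ).PosSemidef := by
  set M := Matrix.hadamard (G.lapMatrix ℝ) (Z + 1) with hM
  rw [Matrix.posSemidef_iff_dotProduct_mulVec]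
  constructor
  · rw [Matrix.IsHermitian, Matrix.conjTranspose_eq_transpose_of_trivial,
      Matrix.transpose_add, Matrix.transpose_transpose, add_comm]
  · intro x
    have hstar : star x = x := by simp
    rw [hstar, Matrix.add_mulVec, dotProduct_add]
    have htr : x ⬝ᵥ (Mᵀ *ᵥ x) = x ⬝ᵥ (M *ᵥ x) := by
      rw [Matrix.dotProduct_mulVec, Matrix.vecMul_transpose, dotProduct_comm]
    rw [htr, lying_quad_form n G Z hZdiag x]
    have hswap : (∑ u, ∑ v, (if G.Adj u v then x u * x u - Z u v * (x u * x v) else 0)) =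
        ∑ u, ∑ v, (if G.Adj v u then x v * x v - Z v u * (x v * x u) else 0) :=
      Finset.sum_comm
    nth_rewrite 2 [hswap]
    rw [← Finset.sum_add_distrib]
    simp_rw [← Finset.sum_add_distrib]
    apply Finset.sum_nonneg
    intro u _
    apply Finset.sum_nonneg
    intro v _
    by_cases hadj : G.Adj u v
    · have hadj' : G.Adj v u := hadj.symm
      simp only [hadj, hadj', if_true]
      have h1 := abs_le.mp (hZbdd u v)
      have h2 := abs_le.mp (hZbdd v u)
      nlinarith [sq_nonneg (x u - x v), sq_nonneg (x u + x v),
        mul_self_nonneg (x u * x v)]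
    · have hadj' : ¬ G.Adj v u := fun h => hadj h.symm
      simp [hadj, hadj']

/-- A real positive semidefinite matrix stays positive semidefinite after mapping to ℂ. -/
lemma posSemidef_map_ofReal {n : ℕ} {B : Matrix (Fin n) (Fin n) ℝ} (hB : B.PosSemidef) :
    (B.map Complex.ofReal).PosSemidef := by
  obtain ⟨K, hK⟩ : ∃ K : Matrix (Fin n) (Fin n) ℝ, B = Kᴴ * K := by
    open scoped MatrixOrder in
    exact CStarAlgebra.nonneg_iff_eq_star_mul_self.mp hB.nonneg
  have hmap : B.map Complex.ofReal = (K.map Complex.ofReal)ᴴ * (K.map Complex.ofReal) := by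
    have hcoe : (Complex.ofReal : ℝ → ℂ) = ⇑Complex.ofRealHom := rfl
    have hstar : Function.Semiconj (Complex.ofReal : ℝ → ℂ) star star := by
      intro a; simp [Complex.conj_ofReal]
    rw [hK, ← Matrix.conjTranspose_map _ hstar, hcoe, Matrix.map_mul]
  rw [hmap]
  exact Matrix.posSemidef_conjTranspose_mul_self _

theorem lying_diffusion_eigenvalue_re_nonneg
    (n : ℕ) (G : SimpleGraph (Fin n)) [DecidableRel G.Adj]
    (Z : Matrix (Fin n) (Fin n) ℝ)
    (hZdiag : ∀ u, Z u u = 0) (hZbdd : ∀ u v, |Z u v| ≤ 1)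
    (E : Matrix (Fin n) (Fin n) ℝ)
    (hE : E = Matrix.diagonal (fun u => (Real.sqrt ((G.degree u : ℝ) + 1))⁻¹) *
            Matrix.hadamard (G.lapMatrix ℝ) (Z + 1) *
            Matrix.diagonal (fun u => (Real.sqrt ((G.degree u : ℝ) + 1))⁻¹))
    (lam : ℂ) (hlam : lam ∈ spectrum ℂ (E.map Complex.ofReal)) :
    0 ≤ lam.re := by
  classical
  set S := Matrix.diagonal (fun u => (Real.sqrt ((G.degree u : ℝ) + 1))⁻¹) with hS
  set M := Matrix.hadamard (G.lapMatrix ℝ) (Z + 1) with hM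
  -- E + Eᵀ is PSD over ℝ
  have hSsymm : Sᴴ = S := by
    rw [Matrix.conjTranspose_eq_transpose_of_trivial, Matrix.diagonal_transpose]
  have hC : (M + Mᵀ).PosSemidef := lying_posSemidef n G Z hZdiag hZbdd
  have hEt : Eᵀ = S * Mᵀ * S := by
    rw [hE, Matrix.transpose_mul, Matrix.transpose_mul]
    rw [show Sᵀ = S from by rw [Matrix.diagonal_transpose]]
    rw [mul_assoc]
  have hB : (E + Eᵀ).PosSemidef := by
    have := hC.mul_mul_conjTranspose_same S
    rw [hSsymm] at this
    have hfact : E + Eᵀ = S * (M + Mᵀ) * S := by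
      rw [hEt, hE]; noncomm_ring
    rw [hfact]; exact this
  -- transfer to ℂ
  have hBC : ((E + Eᵀ).map Complex.ofReal).PosSemidef := posSemidef_map_ofReal hB
  -- extract an eigenvector
  set Mc := E.map Complex.ofReal with hMc
  rw [← AlgEquiv.spectrum_eq (Matrix.toLinAlgEquiv' : Matrix (Fin n) (Fin n) ℂ ≃ₐ[ℂ] _) Mc,
    ← Module.End.hasEigenvalue_iff_mem_spectrum] at hlam
  obtain ⟨v, hv⟩ := hlam.exists_hasEigenvector
  have hvec : Mc *ᵥ v = lam • v := by
    rw [← Matrix.toLinAlgEquiv'_apply]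
    exact hv.apply_eq_smul
  have hvne : v ≠ 0 := hv.2
  -- the quadratic form value
  set c : ℂ := star v ⬝ᵥ (Mc *ᵥ v) with hc
  have hcs : star v ⬝ᵥ (Mcᴴ *ᵥ v) = star c := by
    rw [hc, Matrix.star_dotProduct, Matrix.star_mulVec, Matrix.conjTranspose_conjTranspose,
      ← Matrix.dotProduct_mulVec]
  have hsum : star v ⬝ᵥ (((E + Eᵀ).map Complex.ofReal) *ᵥ v) = c + star c := by
    have hmapadd : (E + Eᵀ).map Complex.ofReal = Mc + Eᵀ.map Complex.ofReal := by
      rw [Matrix.map_add _ (by push_cast; simp)]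
    have hconj : Eᵀ.map Complex.ofReal = Mcᴴ := by
      rw [hMc, ← Matrix.conjTranspose_map (Complex.ofReal : ℝ → ℂ)
        (fun a => (Complex.conj_ofReal a).symm),
        Matrix.conjTranspose_eq_transpose_of_trivial]
    rw [hmapadd, hconj, Matrix.add_mulVec, dotProduct_add, ← hc, hcs]
  have hre : 0 ≤ (c + star c).re := by
    have := hBC.re_dotProduct_nonneg v
    rw [hsum] at this
    simpa using this
  have hcre : 0 ≤ c.re := by
    have : (c + star c).re = 2 * c.re := by
      simp [Complex.add_re]; ring
    rw [this] at hre; linarith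
  -- c = lam * ‖v‖²
  set s : ℝ := ∑ i, Complex.normSq (v i) with hs
  have hts : star v ⬝ᵥ v = (s : ℂ) := by
    rw [hs]
    push_cast
    simp [dotProduct, Complex.normSq_eq_conj_mul_self]
  have hcval : c = lam * (s : ℂ) := by
    rw [hc, hvec, dotProduct_smul, hts, smul_eq_mul]
  have hspos : 0 < s := by
    obtain ⟨i, hi⟩ := Function.ne_iff.mp hvne
    exact Finset.sum_pos' (fun j _ => Complex.normSq_nonneg _)
      ⟨i, Finset.mem_univ i, by simpa [Complex.normSq_pos] using hi⟩
  have : c.re = lam.re * s := by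
    rw [hcval]; simp [Complex.mul_re]
  rw [this] at hcre
  nlinarith
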